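/- Let Φ be a root system of type A_{n−1} with Weyl group W = S_n, let J ⊆ Δ, and let X = Σ_{γ ∈ Φ_X} E_γ be a nilpotent matrix supported on a set Φ_X of positive roots (i.e., X is strictly upper triangular). Write w ∈ W as w = vy where v is the minimal-length coset representative of wW_J and y ∈ W_J. Then w⁻¹ · X := Ad(w⁻¹)X lies in the standard parabolic subalgebra p_J if and only if v⁻¹ · X lies in the Borel subalgebra b of upper triangular matrices. -/

import Mathlib

/-- Simple reflection `s_i` in `S_{n+1}` (type `A_n`), swapping positions `i` and `i+1`. -/
def sgen {n : ℕ} (i : Fin n) : Equiv.Perm (Fin (n + 1)) :=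
  Equiv.swap i.castSucc i.succ

/-- Action of a permutation on a root `ε_{p.1} - ε_{p.2}` of type `A`. -/
def actRoot {n : ℕ} (w : Equiv.Perm (Fin n)) (p : Fin n × Fin n) : Fin n × Fin n :=
  (w p.1, w p.2)

/-- The root `ε_{p.1} - ε_{p.2}` is positive. -/
def IsPosRoot {n : ℕ} (p : Fin n × Fin n) : Prop := p.1 < p.2

/-- The root `ε_{p.1} - ε_{p.2}` is negative. -/
def IsNegRoot {n : ℕ} (p : Fin n × Fin n) : Prop := p.2 < p.1

/-- Inversion set `N(w) = {γ ∈ Φ⁺ : w(γ) ∈ Φ⁻}`. -/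
def invSet {n : ℕ} (w : Equiv.Perm (Fin n)) : Set (Fin n × Fin n) :=
  {p | IsPosRoot p ∧ IsNegRoot (actRoot w p)}

/-- Bruhat length = number of inversions. -/
def len {n : ℕ} (w : Equiv.Perm (Fin n)) : ℕ :=
  (Finset.univ.filter fun p : Fin n × Fin n => p.1 < p.2 ∧ w p.2 < w p.1).card

/-- The parabolic subgroup `W_J` generated by the simple reflections indexed by `J`. -/
def WJ {n : ℕ} (J : Set (Fin n)) : Subgroup (Equiv.Perm (Fin (n + 1))) :=
  Subgroup.closure (sgen '' J)

/-- Membership in the sub-root-system `Φ_J` spanned by the simple roots indexed by `J`: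
all simple roots in the support of the root lie in `J`. -/
def InPhiJ {n : ℕ} (J : Set (Fin n)) (p : Fin (n + 1) × Fin (n + 1)) : Prop :=
  p.1 ≠ p.2 ∧ ∀ k : Fin n, min p.1 p.2 ≤ k.castSucc → k.succ ≤ max p.1 p.2 → k ∈ J

/-- `v` is the minimal-length representative of its coset `vW_J`. -/
def IsMinRep {n : ℕ} (J : Set (Fin n)) (v : Equiv.Perm (Fin (n + 1))) : Prop :=
  ∀ y ∈ WJ J, len v ≤ len (v * y)

/-- Membership in the standard parabolic subalgebra `p_J ⊆ gl_{n+1}(ℂ)`: entries below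
the diagonal vanish unless the corresponding negative root lies in `Φ_J`. -/
def InParabolic {n : ℕ} (J : Set (Fin n)) (M : Matrix (Fin (n + 1)) (Fin (n + 1)) ℂ) :
    Prop :=
  ∀ i j : Fin (n + 1), j < i → ¬ InPhiJ J (i, j) → M i j = 0

namespace S6aux

variable {n : ℕ}

def SB (J : Set (Fin n)) (i j : Fin (n + 1)) : Prop :=
  ∀ k : Fin n, min i.val j.val ≤ k.val → k.val + 1 ≤ max i.val j.val → k ∈ J

lemma SB.refl (J : Set (Fin n)) (i : Fin (n + 1)) : SB J i i := by
  intro k h1 h2; exfalso; omega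

lemma SB.symm {J : Set (Fin n)} {i j : Fin (n + 1)} (h : SB J i j) : SB J j i :=
  fun k h1 h2 => h k (by omega) (by omega)

lemma SB.trans {J : Set (Fin n)} {i j l : Fin (n + 1)} (h1 : SB J i j) (h2 : SB J j l) :
    SB J i l := by
  intro k hk1 hk2
  rcases le_or_gt j.val k.val with hj | hj
  · rcases le_or_gt (k.val + 1) l.val with h | h
    · exact h2 k (by omega) (by omega)
    · exact h1 k (by omega) (by omega)
  · rcases le_or_gt i.val k.val with h | h
    · exact h1 k (by omega) (by omega)
    · exact h2 k (by omega) (by omega)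

lemma val_min {m : ℕ} (i j : Fin m) : ((min i j : Fin m) : ℕ) = min i.val j.val := by
  rcases le_total i j with h | h
  · rw [min_eq_left h, Nat.min_eq_left (Fin.le_def.mp h)]
  · rw [min_eq_right h, Nat.min_eq_right (Fin.le_def.mp h)]

lemma val_max {m : ℕ} (i j : Fin m) : ((max i j : Fin m) : ℕ) = max i.val j.val := by
  rcases le_total i j with h | h
  · rw [max_eq_right h, Nat.max_eq_right (Fin.le_def.mp h)]
  · rw [max_eq_left h, Nat.max_eq_left (Fin.le_def.mp h)]

lemma inPhiJ_iff (J : Set (Fin n)) (i j : Fin (n + 1)) :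
    InPhiJ J (i, j) ↔ i ≠ j ∧ SB J i j := by
  unfold InPhiJ SB
  simp only [Fin.le_def, Fin.coe_castSucc, Fin.val_succ, val_min, val_max]

lemma SB_sgen (J : Set (Fin n)) {k : Fin n} (hk : k ∈ J) (i : Fin (n + 1)) :
    SB J i (sgen k i) := by
  unfold sgen
  rcases eq_or_ne i k.castSucc with rfl | h1
  · rw [Equiv.swap_apply_left]
    intro m hm1 hm2
    have : m = k := by
      apply Fin.ext
      simp only [Fin.coe_castSucc, Fin.val_succ] at hm1 hm2
      omega
    rwa [this]
  rcases eq_or_ne i k.succ with rfl | h2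
  · rw [Equiv.swap_apply_right]
    intro m hm1 hm2
    have : m = k := by
      apply Fin.ext
      simp only [Fin.coe_castSucc, Fin.val_succ] at hm1 hm2
      omega
    rwa [this]
  · rw [Equiv.swap_apply_of_ne_of_ne h1 h2]; exact SB.refl J i

lemma SB_of_WJ {J : Set (Fin n)} {y : Equiv.Perm (Fin (n + 1))} (hy : y ∈ WJ J) :
    ∀ i, SB J i (y i) := by
  have hy' : y ∈ Subgroup.closure (sgen '' J) := hy
  clear hy
  induction hy' using Subgroup.closure_induction with
  | mem x hx =>
    obtain ⟨k, hk, rfl⟩ := hx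
    exact SB_sgen J hk
  | one => intro i; simpa using SB.refl J i
  | mul x z hx hz ihx ihz =>
    intro i
    have h1 : SB J i (z i) := ihz i
    have h2 : SB J (z i) (x (z i)) := ihx (z i)
    simpa [Equiv.Perm.mul_apply] using h1.trans h2
  | inv x hx ihx =>
    intro i
    have := (ihx (x⁻¹ i)).symm
    rwa [Equiv.Perm.inv_def, Equiv.apply_symm_apply] at this

lemma lt_of_sb {J : Set (Fin n)} {i j i' j' : Fin (n + 1)} (hji : j < i)
    (hnb : ¬ SB J i j) (hi : SB J i i') (hj : SB J j j') : j' < i' := by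
  unfold SB at hnb; push_neg at hnb
  obtain ⟨k, hk1, hk2, hkJ⟩ := hnb
  have hji' : j.val < i.val := hji
  have hj' : j'.val ≤ k.val := by
    by_contra h; push_neg at h
    exact hkJ (hj k (by omega) (by omega))
  have hi' : k.val + 1 ≤ i'.val := by
    by_contra h; push_neg at h
    exact hkJ (hi k (by omega) (by omega))
  exact Fin.lt_def.mpr (by omega)

lemma len_mul_sgen_lt (v : Equiv.Perm (Fin (n + 1))) (a : Fin n)
    (h : v a.succ < v a.castSucc) : len (v * sgen a) < len v := by
  classical
  have hAB : a.castSucc < a.succ := Fin.castSucc_lt_succ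
  have hABv : (a.castSucc : Fin (n+1)).val + 1 = (a.succ : Fin (n+1)).val := by simp
  have hs : ∀ x y : Fin (n + 1), x < y → (x, y) ≠ (a.castSucc, a.succ) →
      sgen a x < sgen a y := by
    intro x y hxy hne
    have hne' : ¬(x = a.castSucc ∧ y = a.succ) := by
      simpa [Prod.ext_iff] using hne
    unfold sgen
    rw [Equiv.swap_apply_def, Equiv.swap_apply_def]
    have hxy' : x.val < y.val := hxy
    simp only [Fin.ext_iff, Fin.coe_castSucc, Fin.val_succ, not_and] at hne'
    split_ifs with h1 h2 h3 h4 h5 <;>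
      simp only [Fin.lt_def, Fin.ext_iff, Fin.coe_castSucc, Fin.val_succ] at * <;>
      omega
  unfold len
  set S := Finset.univ.filter fun p : Fin (n+1) × Fin (n+1) =>
    p.1 < p.2 ∧ (v * sgen a) p.2 < (v * sgen a) p.1 with hS
  set T := Finset.univ.filter fun p : Fin (n+1) × Fin (n+1) =>
    p.1 < p.2 ∧ v p.2 < v p.1 with hT
  have hmem : (a.castSucc, a.succ) ∈ T := by
    simp [hT, hAB, h]
  have hcard : S.card ≤ (T.erase (a.castSucc, a.succ)).card := by
    apply Finset.card_le_card_of_injOn (fun p => (sgen a p.1, sgen a p.2))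
    · intro p hp
      simp only [Finset.mem_coe, hS, Finset.mem_filter, Finset.mem_univ, true_and] at hp
      obtain ⟨hlt, hinv⟩ := hp
      have hpne : (p.1, p.2) ≠ (a.castSucc, a.succ) := by
        rintro heq
        have h1 : p.1 = a.castSucc := congrArg Prod.fst heq
        have h2 : p.2 = a.succ := congrArg Prod.snd heq
        rw [h1, h2] at hinv
        simp only [Equiv.Perm.mul_apply] at hinv
        unfold sgen at hinv
        rw [Equiv.swap_apply_left, Equiv.swap_apply_right] at hinv
        exact absurd hinv (not_lt.mpr (le_of_lt h))
      have hslt := hs p.1 p.2 hlt hpne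
      simp only [Finset.mem_coe, Finset.mem_erase, hT, Finset.mem_filter, Finset.mem_univ, true_and]
      refine ⟨?_, hslt, ?_⟩
      · rintro heq
        have h1 : sgen a p.1 = a.castSucc := congrArg Prod.fst heq
        have h2 : sgen a p.2 = a.succ := congrArg Prod.snd heq
        have e1 : p.1 = a.succ := by
          have := congrArg (sgen a) h1
          unfold sgen at this
          rwa [Equiv.swap_apply_self, Equiv.swap_apply_left] at this
        have e2 : p.2 = a.castSucc := by
          have := congrArg (sgen a) h2
          unfold sgen at this
          rwa [Equiv.swap_apply_self, Equiv.swap_apply_right] at this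
        rw [e1, e2] at hlt
        exact absurd hlt (not_lt.mpr (le_of_lt hAB))
      · simpa [Equiv.Perm.mul_apply] using hinv
    · intro p hp q hq hpq
      have h1 : sgen a p.1 = sgen a q.1 := congrArg Prod.fst hpq
      have h2 : sgen a p.2 = sgen a q.2 := congrArg Prod.snd hpq
      exact Prod.ext ((sgen a).injective h1) ((sgen a).injective h2)
  calc S.card ≤ (T.erase (a.castSucc, a.succ)).card := hcard
    _ < T.card := Finset.card_erase_lt_of_mem hmem

lemma minrep_increasing {J : Set (Fin n)} {v : Equiv.Perm (Fin (n + 1))}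
    (hv : IsMinRep J v) {k : Fin n} (hk : k ∈ J) : v k.castSucc < v k.succ := by
  have hmem : sgen k ∈ WJ J := Subgroup.subset_closure (Set.mem_image_of_mem _ hk)
  rcases lt_trichotomy (v k.castSucc) (v k.succ) with h | h | h
  · exact h
  · exact absurd (v.injective h) (ne_of_lt ((Fin.castSucc_lt_succ (i := k))))
  · exact absurd (hv _ hmem) (not_le.mpr (len_mul_sgen_lt v k h))

lemma chain {J : Set (Fin n)} {v : Equiv.Perm (Fin (n + 1))} (hv : IsMinRep J v) :
    ∀ d : ℕ, ∀ i j : Fin (n + 1), j.val = i.val + d + 1 →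
      (∀ k : Fin n, i.val ≤ k.val → k.val + 1 ≤ j.val → k ∈ J) → v i < v j := by
  intro d
  induction d with
  | zero =>
    intro i j hij hcond
    have hjlt := j.isLt
    have hi : i.val < n := by omega
    have hkJ : (⟨i.val, hi⟩ : Fin n) ∈ J := hcond ⟨i.val, hi⟩ le_rfl (show i.val + 1 ≤ j.val by omega)
    have h1 : (⟨i.val, hi⟩ : Fin n).castSucc = i := Fin.ext rfl
    have h2 : (⟨i.val, hi⟩ : Fin n).succ = j := Fin.ext (by simp [hij])
    have := minrep_increasing hv hkJ
    rwa [h1, h2] at this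
  | succ d ih =>
    intro i j hij hcond
    have hjlt := j.isLt
    have hi : i.val < n := by omega
    have hkJ : (⟨i.val, hi⟩ : Fin n) ∈ J := hcond ⟨i.val, hi⟩ le_rfl (show i.val + 1 ≤ j.val by omega)
    have h1 : v i < v ((⟨i.val, hi⟩ : Fin n).succ) := by
      have h1' : (⟨i.val, hi⟩ : Fin n).castSucc = i := Fin.ext rfl
      have := minrep_increasing hv hkJ
      rwa [h1'] at this
    have h2 : v ((⟨i.val, hi⟩ : Fin n).succ) < v j := by
      apply ih _ j (by simp [hij]; omega)
      intro m hm1 hm2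
      refine hcond m (by simp at hm1; omega) hm2
    exact h1.trans h2

lemma v_mono {J : Set (Fin n)} {v : Equiv.Perm (Fin (n + 1))} (hv : IsMinRep J v)
    {i j : Fin (n + 1)} (hji : j < i) (hsb : SB J j i) : v j < v i := by
  have hji' : j.val < i.val := hji
  apply chain hv (i.val - j.val - 1) j i (by omega)
  intro k hk1 hk2
  exact hsb k (by omega) (by omega)

end S6aux

/-- let `X` be a nilpotent matrix supported on positive roots (strictly
upper triangular), `w = vy` with `v` the minimal-length representative of `wW_J` and
`y ∈ W_J`.  Then `Ad(w⁻¹)X ∈ p_J` iff `Ad(v⁻¹)X ∈ b`.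
(For a permutation `u`, `(Ad(u⁻¹)X) i j = X (u i) (u j)`.) -/
theorem statement6 {n : ℕ} (J : Set (Fin n))
    (X : Matrix (Fin (n + 1)) (Fin (n + 1)) ℂ)
    (hX : ∀ i j : Fin (n + 1), j ≤ i → X i j = 0)
    (v y w : Equiv.Perm (Fin (n + 1)))
    (hv : IsMinRep J v) (hy : y ∈ WJ J) (hw : w = v * y) :
    InParabolic J (Matrix.of fun i j => X (w i) (w j)) ↔
      ∀ i j : Fin (n + 1), j < i → (Matrix.of fun i j => X (v i) (v j)) i j = 0 := by
  subst hw
  have hyi := S6aux.SB_of_WJ (J := J) hy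
  constructor
  · intro hP i j hji
    simp only [Matrix.of_apply]
    by_cases hb : S6aux.SB J i j
    · exact hX _ _ (le_of_lt (S6aux.v_mono hv hji hb.symm))
    · have h1 : S6aux.SB J (y⁻¹ i) i := by
        have := hyi (y⁻¹ i); rwa [Equiv.Perm.inv_def, Equiv.apply_symm_apply] at this
      have h2 : S6aux.SB J (y⁻¹ j) j := by
        have := hyi (y⁻¹ j); rwa [Equiv.Perm.inv_def, Equiv.apply_symm_apply] at this
      have hlt : y⁻¹ j < y⁻¹ i := S6aux.lt_of_sb hji hb h1.symm h2.symm
      have hnip : ¬ InPhiJ J (y⁻¹ i, y⁻¹ j) := by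
        rw [S6aux.inPhiJ_iff]
        rintro ⟨-, hsb⟩
        exact hb ((h1.symm.trans hsb).trans h2)
      have := hP (y⁻¹ i) (y⁻¹ j) hlt hnip
      simpa only [Matrix.of_apply, Equiv.Perm.mul_apply, Equiv.Perm.inv_def, Equiv.apply_symm_apply]
        using this
  · intro hB i j hji hnip
    simp only [Matrix.of_apply, Equiv.Perm.mul_apply]
    have hb : ¬ S6aux.SB J i j := fun hsb =>
      hnip ((S6aux.inPhiJ_iff J i j).mpr ⟨hji.ne', hsb⟩)
    have hlt : y j < y i := S6aux.lt_of_sb hji hb (hyi i) (hyi j)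
    have := hB (y i) (y j) hlt
    simpa only [Matrix.of_apply] using this
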